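/- arXiv:2002.00408 — 8 statements merged into one kernel-verified Lean document; each statement's English description precedes it below -/
import Mathlib

section
/- Let X be a topological space, f ∈ F(X) and α > 0. Then liminf_{β→α} L_β f = closure(ℓ_α f) ⊆ closure(L_α f) ⊆ ⋂_{ε>0} closure(ℓ_{α+ε} f) = limsup_{β→α} L_β f. -/
open Set Topology
open scoped ENNReal Pointwise

noncomputable section

/-- Kuratowski upper limit of a net of sets indexed by a relation `r`. -/
def KLimsup {X Λ : Type*} [TopologicalSpace X] (r : Λ → Λ → Prop) (A : Λ → Set X) : Set X :=
  {x | ∀ U ∈ nhds x, ∀ μ : Λ, ∃ l : Λ, r μ l ∧ (A l ∩ U).Nonempty}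

/-- Kuratowski lower limit of a net of sets indexed by a relation `r`. -/
def KLiminf {X Λ : Type*} [TopologicalSpace X] (r : Λ → Λ → Prop) (A : Λ → Set X) : Set X :=
  {x | ∀ U ∈ nhds x, ∃ μ : Λ, ∀ l : Λ, r μ l → (A l ∩ U).Nonempty}

/-- Strict α-level set. -/
def lset {X : Type*} (f : X → ℝ≥0∞) (α : ℝ) : Set X := {x | f x < ENNReal.ofReal α}

/-- Non-strict α-level set. -/
def Lset {X : Type*} (f : X → ℝ≥0∞) (α : ℝ) : Set X := {x | f x ≤ ENNReal.ofReal α}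

/-- A level function: all strict level sets (for real α > 0) are nonempty. -/
def IsLevelFun {X : Type*} (f : X → ℝ≥0∞) : Prop := ∀ α : ℝ, 0 < α → (lset f α).Nonempty

/-- Epigraph E(f) ⊆ X × ℝ. -/
def Epi {X : Type*} (f : X → ℝ≥0∞) : Set (X × ℝ) :=
  {p | 0 < p.2 ∧ f p.1 ≤ ENNReal.ofReal p.2}

/-- Strict epigraph e(f) ⊆ X × ℝ. -/
def epiStrict {X : Type*} (f : X → ℝ≥0∞) : Set (X × ℝ) :=
  {p | 0 < p.2 ∧ f p.1 < ENNReal.ofReal p.2}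

/-- A set is robust if its closure equals the closure of its interior. -/
def Robust {Y : Type*} [TopologicalSpace Y] (A : Set Y) : Prop :=
  closure A = closure (interior A)

/-- Kuratowski upper limit of β ↦ L_β f as β → α along the punctured filter in (0,∞). -/
def PLimsup {X : Type*} [TopologicalSpace X] (f : X → ℝ≥0∞) (α : ℝ) : Set X :=
  {x | ∀ U ∈ nhds x, ∀ δ : ℝ, 0 < δ →
    ∃ β : ℝ, 0 < β ∧ 0 < |β - α| ∧ |β - α| < δ ∧ (Lset f β ∩ U).Nonempty}

/-- Kuratowski lower limit of β ↦ L_β f as β → α along the punctured filter in (0,∞). -/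
def PLiminf {X : Type*} [TopologicalSpace X] (f : X → ℝ≥0∞) (α : ℝ) : Set X :=
  {x | ∀ U ∈ nhds x, ∃ δ : ℝ, 0 < δ ∧
    ∀ β : ℝ, 0 < β → 0 < |β - α| → |β - α| < δ → (Lset f β ∩ U).Nonempty}

/-- liminf_{β→α} L_β f = closure(ℓ_α f) ⊆ closure(L_α f)
    ⊆ ⋂_{ε>0} closure(ℓ_{α+ε} f) = limsup_{β→α} L_β f. -/
theorem stmt2 {X : Type*} [TopologicalSpace X] (f : X → ℝ≥0∞) (hf : IsLevelFun f)
    (α : ℝ) (hα : 0 < α) :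
    PLiminf f α = closure (lset f α) ∧
    closure (lset f α) ⊆ closure (Lset f α) ∧
    closure (Lset f α) ⊆ (⋂ ε > (0 : ℝ), closure (lset f (α + ε))) ∧
    (⋂ ε > (0 : ℝ), closure (lset f (α + ε))) = PLimsup f α := by
  refine ⟨?_, closure_mono fun x (hx : f x < _) => show f x ≤ _ from le_of_lt hx, ?_, ?_⟩
  · -- PLiminf = closure (lset f α)
    apply Set.Subset.antisymm
    · -- PLiminf ⊆ closure lset
      intro x hx
      rw [mem_closure_iff_nhds]
      intro U hU
      obtain ⟨δ, hδ, h⟩ := hx U hU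
      set β := α - min δ α / 2 with hβdef
      have hmin : 0 < min δ α := lt_min hδ hα
      have hβpos : 0 < β := by
        have : min δ α / 2 < α := lt_of_lt_of_le (by linarith) (min_le_right _ _)
        simp only [hβdef]; linarith
      have habs : |β - α| = min δ α / 2 := by
        rw [hβdef]; rw [abs_of_nonpos (by linarith)]; ring
      obtain ⟨y, hyL, hyU⟩ := h β hβpos (by rw [habs]; linarith) (by
        rw [habs]; exact lt_of_lt_of_le (by linarith) (min_le_left _ _))
      refine ⟨y, hyU, ?_⟩
      have hβα : β < α := by
        simp only [hβdef]; linarith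
      exact lt_of_le_of_lt hyL ((ENNReal.ofReal_lt_ofReal_iff hα).mpr hβα)
    · -- closure lset ⊆ PLiminf
      intro x hx U hU
      rw [mem_closure_iff_nhds] at hx
      obtain ⟨y, hyU, hy⟩ := hx U hU
      have hyfin : f y ≠ ⊤ := (lt_of_lt_of_le hy le_top).ne
      set t := (f y).toReal with ht
      have htα : t < α := by
        have := (ENNReal.lt_ofReal_iff_toReal_lt hyfin).mp hy
        exact this
      refine ⟨α - t, by linarith, fun β hβ h1 h2 => ⟨y, ?_, hyU⟩⟩
      have htβ : t ≤ β := by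
        rcases abs_lt.mp h2 with ⟨hl, _⟩
        linarith
      show f y ≤ ENNReal.ofReal β
      rw [ENNReal.le_ofReal_iff_toReal_le hyfin (le_of_lt hβ)]
      exact htβ
  · -- closure Lset ⊆ ⋂
    intro x hx
    simp only [Set.mem_iInter]
    intro ε hε
    refine closure_mono ?_ hx
    intro y hy
    exact lt_of_le_of_lt hy ((ENNReal.ofReal_lt_ofReal_iff (by linarith)).mpr (by linarith))
  · -- ⋂ = PLimsup
    apply Set.Subset.antisymm
    · intro x hx U hU δ hδ
      simp only [Set.mem_iInter] at hx
      have := hx (δ / 2) (by linarith)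
      rw [mem_closure_iff_nhds] at this
      obtain ⟨y, hyU, hy⟩ := this U hU
      refine ⟨α + δ / 2, by linarith, ?_, ?_, y, show f y ≤ _ from le_of_lt hy, hyU⟩
      · rw [abs_of_nonneg (by linarith)]; linarith
      · rw [abs_of_nonneg (by linarith)]; linarith
    · intro x hx
      simp only [Set.mem_iInter]
      intro ε hε
      rw [mem_closure_iff_nhds]
      intro U hU
      obtain ⟨β, hβ, h1, h2, y, hyL, hyU⟩ := hx U hU ε hε
      refine ⟨y, hyU, ?_⟩
      have hβlt : β < α + ε := by
        rcases abs_lt.mp h2 with ⟨_, hr⟩; linarith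
      exact lt_of_le_of_lt hyL ((ENNReal.ofReal_lt_ofReal_iff (by linarith)).mpr hβlt)
end
end

section
/- Let X be a topological space and f ∈ F(X). If closure(interior(ℓ_α f)) = closure(ℓ_α f) for every α > 0 (i.e. every strict level set of f is robust), then closure(interior(e(f))) = closure(e(f)) in X × ℝ (i.e. the strict epigraph e(f) is robust). In particular every L-robust level function is E-robust. -/
open Set Topology
open scoped ENNReal Pointwise

noncomputable section

/-- if every strict level set of f is robust, then the strict epigraph
e(f) is robust; i.e. every L-robust level function is E-robust. -/
theorem stmt4 {X : Type*} [TopologicalSpace X] (f : X → ℝ≥0∞) (hf : IsLevelFun f)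
    (h : ∀ α : ℝ, 0 < α → Robust (lset f α)) :
    Robust (epiStrict f) := by
  refine le_antisymm ?_ (closure_mono interior_subset)
  rw [← closure_closure (s := interior (epiStrict f))]
  refine closure_mono ?_
  rintro ⟨x, β⟩ ⟨hβ, hfx⟩
  -- choose α with toReal (f x) < α < β
  have hfin : f x ≠ ⊤ := ne_top_of_lt hfx
  have htr : (f x).toReal < β := by
    have := (ENNReal.lt_ofReal_iff_toReal_lt hfin).mp hfx
    exact this
  set α : ℝ := ((f x).toReal + β) / 2 with hα
  have h0 : 0 ≤ (f x).toReal := ENNReal.toReal_nonneg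
  have hαβ : α < β := by simp only [hα]; linarith
  have htα : (f x).toReal < α := by simp only [hα]; linarith
  have hαpos : 0 < α := by linarith
  have hxα : x ∈ lset f α := by
    have : f x < ENNReal.ofReal α :=
      (ENNReal.lt_ofReal_iff_toReal_lt hfin).mpr htα
    exact this
  -- x ∈ closure (interior (lset f α))
  have hx : x ∈ closure (interior (lset f α)) := by
    rw [← h α hαpos]; exact subset_closure hxα
  -- the set interior(lset f α) ×ˢ Ioi α is open and ⊆ epiStrict f
  have hsub : interior (lset f α) ×ˢ Ioi α ⊆ interior (epiStrict f) := by
    apply interior_maximal _ (isOpen_interior.prod isOpen_Ioi)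
    rintro ⟨y, t⟩ ⟨hy, ht⟩
    have hy' : y ∈ lset f α := interior_subset hy
    exact ⟨hαpos.trans ht, hy'.trans_le (ENNReal.ofReal_le_ofReal ht.le)⟩
  have hmem : (x, β) ∈ closure (interior (lset f α) ×ˢ Ioi α) := by
    rw [closure_prod_eq]
    exact ⟨hx, subset_closure hαβ⟩
  exact closure_mono hsub hmem
end
end

section
/- Let X be a topological space, (f_λ)_{λ∈Λ} a net in F(X) and α > 0. If (x,α) ∈ limsup_λ E(f_λ) then x ∈ limsup_λ L_{α+ε} f_λ for every ε > 0, and if (x,α) ∈ liminf_λ E(f_λ) then x ∈ liminf_λ L_{α+ε} f_λ for every ε > 0. -/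
open Set Topology
open scoped ENNReal Pointwise

noncomputable section

/-- membership in Kuratowski limits of epigraphs passes to level sets
at any level α + ε with ε > 0. -/
theorem stmt6 {X Λ : Type*} [TopologicalSpace X] [Preorder Λ] [Nonempty Λ]
    [IsDirected Λ (· ≤ ·)] (F : Λ → X → ℝ≥0∞) (hF : ∀ l, IsLevelFun (F l))
    (α : ℝ) (hα : 0 < α) (x : X) :
    ((x, α) ∈ KLimsup (· ≤ · : Λ → Λ → Prop) (fun l => Epi (F l)) →
      ∀ ε : ℝ, 0 < ε →
        x ∈ KLimsup (· ≤ · : Λ → Λ → Prop) (fun l => Lset (F l) (α + ε))) ∧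
    ((x, α) ∈ KLiminf (· ≤ · : Λ → Λ → Prop) (fun l => Epi (F l)) →
      ∀ ε : ℝ, 0 < ε →
        x ∈ KLiminf (· ≤ · : Λ → Λ → Prop) (fun l => Lset (F l) (α + ε))) := by
  have key : ∀ (l : Λ) (U : Set X), ((Epi (F l)) ∩ (U ×ˢ Set.Ioo (α - 1) (α + 1))).Nonempty →
      ∀ ε : ℝ, 0 < ε → 1 ≤ ε → (Lset (F l) (α + ε) ∩ U).Nonempty := by
    rintro l U ⟨⟨y, β⟩, ⟨hβpos, hfy⟩, hyU, hβ1, hβ2⟩ ε hε hε1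
    exact ⟨y, le_trans hfy (ENNReal.ofReal_le_ofReal (by linarith)), hyU⟩
  constructor
  · intro h ε hε
    -- reduce: it suffices to prove for ε, using monotonicity in ε via scaling neighborhood
    intro U hU μ
    obtain ⟨l, hl, ⟨y, β⟩, ⟨hβpos, hfy⟩, hyU, hβ1, hβ2⟩ :=
      h (U ×ˢ Set.Ioo (α - ε) (α + ε)) (prod_mem_nhds hU (Ioo_mem_nhds (by linarith) (by linarith))) μ
    exact ⟨l, hl, y, le_trans hfy (ENNReal.ofReal_le_ofReal (le_of_lt hβ2)), hyU⟩
  · intro h ε hε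
    intro U hU
    obtain ⟨μ, hμ⟩ := h (U ×ˢ Set.Ioo (α - ε) (α + ε))
      (prod_mem_nhds hU (Ioo_mem_nhds (by linarith) (by linarith)))
    refine ⟨μ, fun l hl => ?_⟩
    obtain ⟨⟨y, β⟩, ⟨hβpos, hfy⟩, hyU, hβ1, hβ2⟩ := hμ l hl
    exact ⟨y, le_trans hfy (ENNReal.ofReal_le_ofReal (le_of_lt hβ2)), hyU⟩
end
end

section
/- Let X be a topological space, (f_λ)_{λ∈Λ} a net in F(X) and f ∈ F(X). If (f_λ) L-converges to f, then (f_λ) E-converges to f. -/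
open Set Topology
open scoped ENNReal Pointwise

noncomputable section

/-- Weak level convergence of a net of level functions. -/
def LConvergesTo {X Λ : Type*} [TopologicalSpace X] (r : Λ → Λ → Prop)
    (F : Λ → X → ℝ≥0∞) (f : X → ℝ≥0∞) : Prop :=
  ∀ α : ℝ, 0 < α →
    KLimsup r (fun l => Lset (F l) α) ⊆ closure (Lset f α) ∧
    closure (Lset f α) ⊆ KLiminf r (fun l => Lset (F l) α)

/-- Weak epigraph convergence of a net of level functions. -/
def EConvergesTo {X Λ : Type*} [TopologicalSpace X] (r : Λ → Λ → Prop)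
    (F : Λ → X → ℝ≥0∞) (f : X → ℝ≥0∞) : Prop :=
  KLimsup r (fun l => Epi (F l)) ⊆ closure (Epi f) ∧
  closure (Epi f) ⊆ KLiminf r (fun l => Epi (F l))

/-- L-convergence implies E-convergence. -/
theorem stmt7 {X Λ : Type*} [TopologicalSpace X] [Preorder Λ] [Nonempty Λ]
    [IsDirected Λ (· ≤ ·)] (F : Λ → X → ℝ≥0∞) (hF : ∀ l, IsLevelFun (F l))
    (f : X → ℝ≥0∞) (hf : IsLevelFun f)
    (h : LConvergesTo (· ≤ · : Λ → Λ → Prop) F f) :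
    EConvergesTo (· ≤ · : Λ → Λ → Prop) F f := by
  constructor
  · rintro ⟨x, α⟩ hx
    have hα : 0 ≤ α := by
      by_contra hneg
      push_neg at hneg
      obtain ⟨μ⟩ := ‹Nonempty Λ›
      obtain ⟨l, -, ⟨⟨y, γ⟩, hyγ, hmem⟩⟩ := hx ((univ : Set X) ×ˢ Iio (0:ℝ))
        (prod_mem_nhds Filter.univ_mem (Iio_mem_nhds hneg)) μ
      exact absurd hyγ.1 (not_lt.mpr (le_of_lt hmem.2))
    rw [mem_closure_iff_nhds]
    intro V hV
    obtain ⟨U, hU, T, hT, hUT⟩ := mem_nhds_prod_iff.mp hV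
    obtain ⟨ε, hε, hball⟩ := Metric.mem_nhds_iff.mp hT
    set β := α + ε/2 with hβdef
    have hβ : 0 < β := by positivity
    have hxK : x ∈ KLimsup (· ≤ ·) (fun l => Lset (F l) β) := by
      intro U' hU' μ
      obtain ⟨l, hl, ⟨⟨y, γ⟩, hyγ, hy, hγ⟩⟩ := hx (U' ×ˢ Metric.ball α (ε/2))
        (prod_mem_nhds hU' (Metric.ball_mem_nhds _ (by linarith))) μ
      have hγβ : γ ≤ β := by
        rw [Metric.mem_ball, Real.dist_eq, abs_lt] at hγ
        simp only [hβdef]; linarith [hγ.2]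
      exact ⟨l, hl, y, le_trans hyγ.2 (ENNReal.ofReal_le_ofReal hγβ), hy⟩
    have hxc := (h β hβ).1 hxK
    obtain ⟨y, hyU, hyL⟩ := mem_closure_iff_nhds.mp hxc U hU
    refine ⟨(y, β), hUT ⟨hyU, hball ?_⟩, hβ, hyL⟩
    rw [Metric.mem_ball, Real.dist_eq, abs_lt]
    constructor <;> simp only [hβdef] <;> linarith
  · rintro ⟨x, α⟩ hx V hV
    obtain ⟨U, hU, T, hT, hUT⟩ := mem_nhds_prod_iff.mp hV
    obtain ⟨U', hU'sub, hU'open, hxU'⟩ := mem_nhds_iff.mp hU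
    obtain ⟨ε, hε, hball⟩ := Metric.mem_nhds_iff.mp hT
    obtain ⟨⟨y, γ⟩, ⟨hyU', hγball⟩, hγpos, hfy⟩ := mem_closure_iff_nhds.mp hx
      (U' ×ˢ Metric.ball α (ε/2))
      (prod_mem_nhds (hU'open.mem_nhds hxU') (Metric.ball_mem_nhds _ (by linarith)))
    have hyc : y ∈ closure (Lset f γ) := subset_closure hfy
    have hyK := (h γ hγpos).2 hyc
    obtain ⟨μ, hμ⟩ := hyK U' (hU'open.mem_nhds hyU')
    refine ⟨μ, fun l hl => ?_⟩
    obtain ⟨z, hz, hzU'⟩ := hμ l hl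
    exact ⟨(z, γ), ⟨hγpos, hz⟩, hUT ⟨hU'sub hzU',
      hball (Metric.ball_subset_ball (by linarith) hγball)⟩⟩
end
end

section
/- Let X be a topological space, (f_λ)_{λ∈Λ} a net in F(X) and f ∈ F(X). If f is weak level continuous and (f_λ) E-converges to f, then (f_λ) L-converges to f. -/
open Set Topology
open scoped ENNReal Pointwise

noncomputable section

/-- if f is weak level continuous, E-convergence implies L-convergence. -/
theorem stmt8 {X Λ : Type*} [TopologicalSpace X] [Preorder Λ] [Nonempty Λ]
    [IsDirected Λ (· ≤ ·)] (F : Λ → X → ℝ≥0∞) (hF : ∀ l, IsLevelFun (F l))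
    (f : X → ℝ≥0∞) (hf : IsLevelFun f)
    (hcont : ∀ α : ℝ, 0 < α →
      (⋂ ε > (0 : ℝ), closure (lset f (α + ε))) = closure (lset f α))
    (h : EConvergesTo (· ≤ · : Λ → Λ → Prop) F f) :
    LConvergesTo (· ≤ · : Λ → Λ → Prop) F f := by
  obtain ⟨h1, h2⟩ := h
  intro α hα
  constructor
  · -- upper part
    intro x hx
    have key : ∀ ε : ℝ, 0 < ε → x ∈ closure (lset f (α + ε)) := by
      intro ε hε
      have hmem : ((x, α + ε/2) : X × ℝ) ∈ KLimsup (· ≤ · : Λ → Λ → Prop) (fun l => Epi (F l)) := by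
        intro W hW μ
        rw [nhds_prod_eq, Filter.mem_prod_iff] at hW
        obtain ⟨U, hU, V, hV, hUV⟩ := hW
        obtain ⟨l, hl, y, hy1, hy2⟩ := hx U hU μ
        exact ⟨l, hl, (y, α + ε/2),
          ⟨by linarith, le_trans hy1 (ENNReal.ofReal_le_ofReal (by linarith))⟩,
          hUV ⟨hy2, mem_of_mem_nhds hV⟩⟩
      have hcl : ((x, α + ε/2) : X × ℝ) ∈ closure (Epi f) := h1 hmem
      rw [mem_closure_iff_nhds] at hcl ⊢
      intro U hU
      have hn : U ×ˢ Iio (α + ε) ∈ nhds ((x, α + ε/2) : X × ℝ) := by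
        rw [nhds_prod_eq]; exact Filter.prod_mem_prod hU (Iio_mem_nhds (by linarith))
      obtain ⟨⟨y, β⟩, ⟨hyU, hβ⟩, hβpos, hfy⟩ := hcl _ hn
      refine ⟨y, hyU, ?_⟩
      show f y < ENNReal.ofReal (α + ε)
      exact lt_of_le_of_lt hfy ((ENNReal.ofReal_lt_ofReal_iff (by linarith)).2 hβ)
    have hmem : x ∈ ⋂ ε > (0:ℝ), closure (lset f (α + ε)) := by
      simp only [mem_iInter]; exact fun ε hε => key ε hε
    rw [hcont α hα] at hmem
    have hsub2 : lset f α ⊆ Lset f α := by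
      intro y hy
      show f y ≤ ENNReal.ofReal α
      exact le_of_lt hy
    exact closure_mono hsub2 hmem
  · -- lower part
    intro x hx
    have hsub : closure (Lset f α) ⊆ closure (lset f α) := by
      rw [← hcont α hα]
      refine subset_iInter₂ fun ε hε => closure_mono fun y hy => ?_
      show f y < ENNReal.ofReal (α + ε)
      exact lt_of_le_of_lt hy ((ENNReal.ofReal_lt_ofReal_iff (by linarith)).2 (by linarith))
    have hx' := hsub hx
    intro U hU
    obtain ⟨O, hOU, hOopen, hxO⟩ := mem_nhds_iff.1 hU
    obtain ⟨y, hyO, hfy⟩ := mem_closure_iff_nhds.1 hx' O (hOopen.mem_nhds hxO)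
    have hfy2 : f y < ENNReal.ofReal α := hfy
    have hne : f y ≠ ⊤ := hfy2.ne_top
    have htlt : (f y).toReal < α := by
      rwa [ENNReal.lt_ofReal_iff_toReal_lt hne] at hfy2
    set β : ℝ := ((f y).toReal + α) / 2 with hβdef
    have htnn : (0:ℝ) ≤ (f y).toReal := ENNReal.toReal_nonneg
    have hβpos : 0 < β := by simp only [hβdef]; linarith
    have hβα : β < α := by simp only [hβdef]; linarith
    have hyβ : f y ≤ ENNReal.ofReal β := by
      rw [ENNReal.le_ofReal_iff_toReal_le hne hβpos.le]
      simp only [hβdef]; linarith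
    have hepi : ((y, β) : X × ℝ) ∈ closure (Epi f) := subset_closure ⟨hβpos, hyβ⟩
    have hlim := h2 hepi (O ×ˢ Iio α)
      (by rw [nhds_prod_eq]; exact Filter.prod_mem_prod (hOopen.mem_nhds hyO) (Iio_mem_nhds hβα))
    obtain ⟨μ, hμ⟩ := hlim
    refine ⟨μ, fun l hl => ?_⟩
    obtain ⟨⟨z, γ⟩, ⟨hγpos, hfz⟩, hzO, hγ⟩ := hμ l hl
    exact ⟨z, hfz.trans (ENNReal.ofReal_le_ofReal hγ.le), hOU hzO⟩
end
end

section
/- Let X be a topological space and (f_λ)_{λ∈Λ} a monotone increasing net in F(X) (λ ≤ μ implies E(f_λ) ⊆ E(f_μ)). Define f : X → [0,∞] by f(x) := inf_{λ∈Λ} f_λ(x). Then f ∈ F(X), closure(E(f)) = closure(⋃_{λ∈Λ} E(f_λ)), and the net (f_λ) E-converges to f. -/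
open Set Topology
open scoped ENNReal Pointwise

noncomputable section

lemma aux_up {X : Type*} [TopologicalSpace X] {V : Set (X × ℝ)} (hV : IsOpen V)
    {x : X} {a : ℝ} (h : (x, a) ∈ V) : ∃ δ > (0:ℝ), (x, a + δ) ∈ V := by
  obtain ⟨s, t, hs, ht, hxs, hat, hst⟩ := isOpen_prod_iff.1 hV x a h
  obtain ⟨ε, hε, hball⟩ := Metric.isOpen_iff.1 ht a hat
  refine ⟨ε/2, by linarith, hst ⟨hxs, hball ?_⟩⟩
  rw [Metric.mem_ball, Real.dist_eq, show a + ε/2 - a = ε/2 by ring,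
    abs_of_nonneg (by linarith)]
  linarith

/-- a monotone increasing net of level functions E-converges to the
pointwise infimum f, which is a level function with
closure(E(f)) = closure(⋃_λ E(f_λ)). -/
theorem stmt11 {X Λ : Type*} [TopologicalSpace X] [Preorder Λ] [Nonempty Λ]
    [IsDirected Λ (· ≤ ·)] (F : Λ → X → ℝ≥0∞) (hF : ∀ l, IsLevelFun (F l))
    (hmono : ∀ l m : Λ, l ≤ m → Epi (F l) ⊆ Epi (F m)) :
    IsLevelFun (fun x => ⨅ l : Λ, F l x) ∧
    closure (Epi (fun x => ⨅ l : Λ, F l x)) = closure (⋃ l : Λ, Epi (F l)) ∧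
    EConvergesTo (· ≤ · : Λ → Λ → Prop) F (fun x => ⨅ l : Λ, F l x) := by
  set f : X → ℝ≥0∞ := fun x => ⨅ l : Λ, F l x with hfdef
  have hsub : ∀ l, Epi (F l) ⊆ Epi f := fun l p hp =>
    ⟨hp.1, le_trans (iInf_le _ l) hp.2⟩
  have hlevel : IsLevelFun f := by
    intro α hα
    obtain ⟨x, hx⟩ := hF (Classical.arbitrary Λ) α hα
    exact ⟨x, show f x < _ from lt_of_le_of_lt (iInf_le _ _) hx⟩
  have key : ∀ p : X × ℝ, p ∈ Epi f → ∀ δ : ℝ, 0 < δ →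
      ∃ l, (p.1, p.2 + δ) ∈ Epi (F l) := by
    intro p hp δ hδ
    have h1 : f p.1 < ENNReal.ofReal (p.2 + δ) :=
      lt_of_le_of_lt hp.2 ((ENNReal.ofReal_lt_ofReal_iff (by linarith [hp.1])).2 (by linarith))
    obtain ⟨l, hl⟩ := iInf_lt_iff.1 h1
    exact ⟨l, ⟨show (0:ℝ) < p.2 + δ by linarith [hp.1], hl.le⟩⟩
  have hepi_cl : Epi f ⊆ closure (⋃ l, Epi (F l)) := by
    intro p hp
    rw [mem_closure_iff]
    intro o ho hpo
    obtain ⟨δ, hδ, hmem⟩ := aux_up ho (show (p.1, p.2) ∈ o from hpo)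
    obtain ⟨l, hl⟩ := key p hp δ hδ
    exact ⟨(p.1, p.2 + δ), hmem, mem_iUnion.2 ⟨l, hl⟩⟩
  have hliminf : closure (Epi f) ⊆ KLiminf (· ≤ · : Λ → Λ → Prop) (fun l => Epi (F l)) := by
    intro p hp U hU
    obtain ⟨q, hq1, hq2⟩ := mem_closure_iff.1 hp (interior U) isOpen_interior
      (mem_interior_iff_mem_nhds.2 hU)
    obtain ⟨δ, hδ, hmem⟩ := aux_up isOpen_interior (show (q.1, q.2) ∈ interior U from hq1)
    obtain ⟨l, hl⟩ := key q hq2 δ hδ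
    exact ⟨l, fun m hm => ⟨(q.1, q.2 + δ), hmono l m hm hl, interior_subset hmem⟩⟩
  have hlimsup : KLimsup (· ≤ · : Λ → Λ → Prop) (fun l => Epi (F l)) ⊆ closure (Epi f) := by
    intro p hp
    rw [mem_closure_iff]
    intro o ho hpo
    obtain ⟨l, -, q, hq1, hq2⟩ := hp o (ho.mem_nhds hpo) (Classical.arbitrary Λ)
    exact ⟨q, hq2, hsub l hq1⟩
  refine ⟨hlevel, ?_, hlimsup, hliminf⟩
  exact le_antisymm (closure_minimal hepi_cl isClosed_closure)
    (closure_mono (iUnion_subset hsub))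
end
end

section
/- Let G be a topological group and f, g ∈ F(G). For every α > 0 the strict level set of the L-convolution satisfies ℓ_α(f *_L g) = (ℓ_α f)(ℓ_α g); in particular f *_L g ∈ F(G). -/
open Set Topology
open scoped ENNReal Pointwise

noncomputable section

/-- The L-convolution of two functions on a group. -/
def LConv {G : Type*} [Group G] (f g : G → ℝ≥0∞) : G → ℝ≥0∞ :=
  fun x => ⨅ y : G, max (f (x * y⁻¹)) (g y)

/-- The E-convolution of two functions on a group. -/
def EConv {G : Type*} [Group G] (f g : G → ℝ≥0∞) : G → ℝ≥0∞ :=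
  fun x => ⨅ y : G, f (x * y⁻¹) + g y

/-- Set product in the group G × ℝ with (x₁,α₁)(x₂,α₂) = (x₁x₂, α₁+α₂). -/
def prodMul {G : Type*} [Mul G] (S T : Set (G × ℝ)) : Set (G × ℝ) :=
  {p | ∃ s ∈ S, ∃ t ∈ T, p = (s.1 * t.1, s.2 + t.2)}

/-- ℓ_α(f *_L g) = (ℓ_α f)(ℓ_α g) for all α > 0; in particular
f *_L g is a level function. -/
theorem stmt13 {G : Type*} [Group G] [TopologicalSpace G] [IsTopologicalGroup G]
    (f g : G → ℝ≥0∞) (hf : IsLevelFun f) (hg : IsLevelFun g) :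
    (∀ α : ℝ, 0 < α → lset (LConv f g) α = lset f α * lset g α) ∧
    IsLevelFun (LConv f g) := by
  have key : ∀ α : ℝ, 0 < α → lset (LConv f g) α = lset f α * lset g α := by
    intro α hα
    ext x
    simp only [lset, Set.mem_setOf_eq, Set.mem_mul, LConv]
    rw [iInf_lt_iff]
    constructor
    · rintro ⟨y, hy⟩
      rw [max_lt_iff] at hy
      exact ⟨x * y⁻¹, hy.1, y, hy.2, inv_mul_cancel_right x y⟩
    · rintro ⟨a, ha, b, hb, rfl⟩
      refine ⟨b, ?_⟩
      rw [mul_inv_cancel_right, max_lt_iff]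
      exact ⟨ha, hb⟩
  exact ⟨key, fun α hα => (key α hα) ▸ (hf α hα).mul (hg α hα)⟩
end
end

section
/- Let G be a topological group and f, g ∈ F(G). Then E(f) E(g) ⊆ E(f *_E g) ⊆ closure(E(f) E(g)), where the products are set products in the group G × ℝ with multiplication (x₁,α₁)(x₂,α₂) = (x₁x₂, α₁+α₂) and the closure is taken in G × ℝ. -/
open Set Topology
open scoped ENNReal Pointwise

noncomputable section

/-- E(f)E(g) ⊆ E(f *_E g) ⊆ closure(E(f)E(g)) in G × ℝ. -/
theorem stmt18 {G : Type*} [Group G] [TopologicalSpace G] [IsTopologicalGroup G]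
    (f g : G → ℝ≥0∞) (hf : IsLevelFun f) (hg : IsLevelFun g) :
    prodMul (Epi f) (Epi g) ⊆ Epi (EConv f g) ∧
    Epi (EConv f g) ⊆ closure (prodMul (Epi f) (Epi g)) := by
  constructor
  · rintro p ⟨s, hs, t, ht, rfl⟩
    refine ⟨add_pos hs.1 ht.1, ?_⟩
    calc EConv f g (s.1 * t.1) ≤ f (s.1 * t.1 * t.1⁻¹) + g t.1 := iInf_le _ t.1
      _ = f s.1 + g t.1 := by rw [mul_inv_cancel_right]
      _ ≤ ENNReal.ofReal s.2 + ENNReal.ofReal t.2 := add_le_add hs.2 ht.2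
      _ = ENNReal.ofReal (s.2 + t.2) := (ENNReal.ofReal_add hs.1.le ht.1.le).symm
  · rintro ⟨x, α⟩ ⟨hα, hle⟩
    have key : ∀ ε : ℝ, 0 < ε → ((x, α + ε) : G × ℝ) ∈ prodMul (Epi f) (Epi g) := by
      intro ε hε
      have hlt : EConv f g x < ENNReal.ofReal (α + ε) :=
        lt_of_le_of_lt hle ((ENNReal.ofReal_lt_ofReal_iff (by linarith)).2 (by linarith))
      obtain ⟨y, hy⟩ := iInf_lt_iff.1 hlt
      have hfin : f (x * y⁻¹) + g y ≠ ⊤ := hy.ne_top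
      have h1 : f (x * y⁻¹) ≠ ⊤ := fun h => hfin (by simp [h])
      have h2 : g y ≠ ⊤ := fun h => hfin (by simp [h])
      set a := (f (x * y⁻¹)).toReal with ha
      set b := (g y).toReal with hb
      have ha0 : 0 ≤ a := ENNReal.toReal_nonneg
      have hb0 : 0 ≤ b := ENNReal.toReal_nonneg
      have hab : a + b < α + ε := by
        have := (ENNReal.lt_ofReal_iff_toReal_lt hfin).1 hy
        rwa [ENNReal.toReal_add h1 h2] at this
      set δ := (α + ε - a - b) / 2 with hδ
      have hδ0 : 0 < δ := by rw [hδ]; linarith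
      refine ⟨(x * y⁻¹, a + δ), ⟨show (0:ℝ) < a + δ by linarith, ?_⟩,
        (y, b + δ), ⟨show (0:ℝ) < b + δ by linarith, ?_⟩, ?_⟩
      · show f (x * y⁻¹) ≤ ENNReal.ofReal (a + δ)
        rw [← ENNReal.ofReal_toReal h1]
        exact ENNReal.ofReal_le_ofReal (by linarith)
      · show g y ≤ ENNReal.ofReal (b + δ)
        rw [← ENNReal.ofReal_toReal h2]
        exact ENNReal.ofReal_le_ofReal (by linarith)
      · simp only [Prod.mk.injEq]
        constructor
        · rw [inv_mul_cancel_right]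
        · rw [hδ]; ring
    have htend : Filter.Tendsto (fun n : ℕ => ((x, α + 1 / (n + 1)) : G × ℝ))
        Filter.atTop (𝓝 (x, α)) := by
      refine Filter.Tendsto.prodMk_nhds tendsto_const_nhds ?_
      have h0 : Filter.Tendsto (fun n : ℕ => α + 1 / ((n : ℝ) + 1)) Filter.atTop (𝓝 (α + 0)) :=
        tendsto_const_nhds.add tendsto_one_div_add_atTop_nhds_zero_nat
      simpa using h0
    exact mem_closure_of_tendsto htend
      (Filter.Eventually.of_forall fun n => key _ (by positivity))
end
end
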